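/- Let η : ℝ → ℝ be nondecreasing with η(0) = 0, β ∈ C¹(ℝ) convex with β'(0) = 0, and ℓ > 0. Then for every u ∈ ℝ, β(T_ℓ(u + η(u))) ≤ β(T_ℓ(u) + η(T_ℓ(u))). -/

import Mathlib

noncomputable def trunc (ℓ u : ℝ) : ℝ := max (-ℓ) (min u ℓ)

theorem stmt_11 (η : ℝ → ℝ) (hη : Monotone η) (hη0 : η 0 = 0)
    (β : ℝ → ℝ) (hβ : ContDiff ℝ 1 β) (hconv : Monotone (deriv β))
    (h0 : deriv β 0 = 0) (ℓ : ℝ) (hℓ : 0 < ℓ) :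
    ∀ u : ℝ, β (trunc ℓ (u + η u)) ≤ β (trunc ℓ u + η (trunc ℓ u)) := by
  have hc : Continuous β := hβ.continuous
  have hmono : MonotoneOn β (Set.Ici 0) := by
    apply monotoneOn_of_deriv_nonneg (convex_Ici 0) hc.continuousOn
      (fun x _ => (hβ.differentiable one_ne_zero x).differentiableWithinAt)
    intro x hx
    rw [interior_Ici] at hx
    calc (0:ℝ) = deriv β 0 := h0.symm
      _ ≤ deriv β x := hconv hx.le
  have hanti : AntitoneOn β (Set.Iic 0) := by
    apply antitoneOn_of_deriv_nonpos (convex_Iic 0) hc.continuousOn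
      (fun x _ => (hβ.differentiable one_ne_zero x).differentiableWithinAt)
    intro x hx
    rw [interior_Iic] at hx
    calc deriv β x ≤ deriv β 0 := hconv hx.le
      _ = 0 := h0
  have key : ∀ v : ℝ, β (trunc ℓ v) ≤ β v := by
    intro v
    unfold trunc
    rcases le_or_gt v (-ℓ) with h | h
    · rw [min_eq_left (h.trans (by linarith)), max_eq_left h]
      exact hanti (Set.mem_Iic.2 (by linarith)) (Set.mem_Iic.2 (by linarith)) h
    · rcases le_or_gt ℓ v with h2 | h2
      · rw [min_eq_right h2, max_eq_right (by linarith)]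
        exact hmono (Set.mem_Ici.2 hℓ.le) (Set.mem_Ici.2 (by linarith)) h2
      · rw [min_eq_left h2.le, max_eq_right h.le]
  intro u
  rcases lt_or_ge ℓ u with hu | hu
  · -- u > ℓ
    have hηu : 0 ≤ η u := hη0 ▸ hη (by linarith : (0:ℝ) ≤ u)
    have hηℓ : 0 ≤ η ℓ := hη0 ▸ hη hℓ.le
    have h1 : trunc ℓ u = ℓ := by
      unfold trunc; rw [min_eq_right hu.le, max_eq_right (by linarith)]
    have h2 : trunc ℓ (u + η u) = ℓ := by
      unfold trunc
      rw [min_eq_right (by linarith), max_eq_right (by linarith)]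
    rw [h1, h2]
    exact hmono (Set.mem_Ici.2 hℓ.le) (Set.mem_Ici.2 (by linarith)) (by linarith)
  rcases lt_or_ge u (-ℓ) with hu2 | hu2
  · -- u < -ℓ
    have hηu : η u ≤ 0 := hη0 ▸ hη (by linarith : u ≤ 0)
    have hηℓ : η (-ℓ) ≤ 0 := hη0 ▸ hη (by linarith : -ℓ ≤ 0)
    have h1 : trunc ℓ u = -ℓ := by
      unfold trunc; rw [min_eq_left (by linarith), max_eq_left (by linarith)]
    have h2 : trunc ℓ (u + η u) = -ℓ := by
      unfold trunc; rw [min_eq_left (by linarith), max_eq_left (by linarith)]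
    rw [h1, h2]
    exact hanti (Set.mem_Iic.2 (by linarith)) (Set.mem_Iic.2 (by linarith)) (by linarith)
  · -- -ℓ ≤ u ≤ ℓ
    have h1 : trunc ℓ u = u := by
      unfold trunc; rw [min_eq_left hu, max_eq_right hu2]
    rw [h1]
    exact key (u + η u)
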